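/- Let m = (m₁,m₂) ∈ ℕ². Call Γ^{(m)} ⊆ K^{(m)} = {γ ∈ ℤ² : 0 ≤ γ₁ ≤ 2m₁, −2m₂ < γ₂ ≤ 2m₂} a spectral index set for I^{(m)} if γ₁+γ₂ is even for all γ ∈ Γ^{(m)} and {χ^{(m)}_γ : γ ∈ Γ^{(m)}} is an orthogonal basis of (L(I^{(m)}), ⟨·,·⟩_w). Then every spectral index set Γ^{(m)} is of the form Γ^{(m)}_Ω = (Γ^{(m)}_□ \ Ω) ∪ {γ ∈ K^{(m)} : γ* ∈ Ω} for some Ω ⊆ Γ^{(m)}_□, where γ* = (2m₁−γ₁, (γ₂+2m₂) mod 4m₂ taken in (−2m₂,2m₂]); and the norms satisfy ‖χ^{(m)}_γ‖²_w = 1 if γ₁ ∈ {0, 2m₁} and ‖χ^{(m)}_γ‖²_w = 1/2 otherwise. -/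

import Mathlib

noncomputable section

/-- The rhodonea curve `ρ^{(m)}_α`. -/
def rho (m₁ m₂ : ℕ) (α : ℝ) (t : ℝ) : ℝ × ℝ :=
  (Real.cos (m₂ * t) * Real.cos (m₁ * t - α * Real.pi),
   Real.cos (m₂ * t) * Real.sin (m₁ * t - α * Real.pi))

/-- The sampling parameters `t^{(m)}_l = l π / (2 m₁ m₂)`. -/
def tSample (m₁ m₂ : ℕ) (l : ℕ) : ℝ := l * Real.pi / (2 * m₁ * m₂)

/-- The set `S^{(m)}(t)` of parameters in `[0, 2π)` hitting the same point as `t`. -/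
def Sset (m₁ m₂ : ℕ) (α t : ℝ) : Set ℝ :=
  {s | s ∈ Set.Ico (0 : ℝ) (2 * Real.pi) ∧ rho m₁ m₂ α s = rho m₁ m₂ α t}

/-- The sample point set `LS^{(m)}_α` along the rhodonea curve. -/
def LSa (m₁ m₂ : ℕ) (α : ℝ) : Set (ℝ × ℝ) :=
  {p | ∃ l : ℕ, l < 4 * m₁ * m₂ ∧ p = rho m₁ m₂ α (tSample m₁ m₂ l)}

/-- The nodal index set `I^{(m)}` as a set. -/
def Idx (m₁ m₂ : ℕ) : Set (ℤ × ℤ) :=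
  {i | 0 ≤ i.1 ∧ i.1 ≤ (m₁ : ℤ) ∧ -(2 * (m₂ : ℤ)) < i.2 ∧ i.2 ≤ 2 * (m₂ : ℤ) ∧
       (i.1 = (m₁ : ℤ) → i.2 ≤ 0) ∧ Even (i.1 + i.2)}

/-- The nodal index set `I^{(m)}` as a finset. -/
def IdxF (m₁ m₂ : ℕ) : Finset (ℤ × ℤ) :=
  (Finset.Icc (0 : ℤ) (m₁ : ℤ) ×ˢ Finset.Ioc (-(2 * (m₂ : ℤ))) (2 * (m₂ : ℤ))).filter
    (fun i => (i.1 = (m₁ : ℤ) → i.2 ≤ 0) ∧ Even (i.1 + i.2))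

/-- Radial coordinate `r^{(m₁)}_{i₁} = cos(i₁ π / (2 m₁))`. -/
def rI (m₁ : ℕ) (i₁ : ℤ) : ℝ := Real.cos (i₁ * Real.pi / (2 * m₁))

/-- Angular coordinate `θ^{(m₂)}_{i₂} = i₂ π / (2 m₂)`. -/
def thetaI (m₂ : ℕ) (i₂ : ℤ) : ℝ := i₂ * Real.pi / (2 * m₂)

/-- The rhodonea node `x^{(m)}_i` in Cartesian coordinates. -/
def node (m₁ m₂ : ℕ) (i : ℤ × ℤ) : ℝ × ℝ :=
  (rI m₁ i.1 * Real.cos (thetaI m₂ i.2), rI m₁ i.1 * Real.sin (thetaI m₂ i.2))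

/-- The rhodonea node set `LS^{(m)}`. -/
def LS (m₁ m₂ : ℕ) : Set (ℝ × ℝ) := node m₁ m₂ '' Idx m₁ m₂

/-- Chebyshev polynomial of the first kind, `T_n(r) = cos(n arccos r)`. -/
def chebT (n : ℕ) (r : ℝ) : ℝ := Real.cos (n * Real.arccos r)

/-- The closed unit disk `𝔻 ⊆ ℝ²`. -/
def closedDisk : Set (ℝ × ℝ) := {x | x.1 ^ 2 + x.2 ^ 2 ≤ 1}

/-- The weights `w^{(m)}_i`. -/
def wgt (m₁ m₂ : ℕ) (i : ℤ × ℤ) : ℝ :=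
  if i.1 = 0 then 1 / (4 * m₁ * m₂) else 2 / (4 * m₁ * m₂)

/-- The discrete basis functions `χ^{(m)}_γ(i)`. -/
def chi (m₁ m₂ : ℕ) (γ i : ℤ × ℤ) : ℂ :=
  (Real.cos (γ.1 * i.1 * Real.pi / (2 * m₁)) : ℂ) *
    Complex.exp (Complex.I * (γ.2 * i.2 * Real.pi / (2 * m₂)))

/-- The discrete inner product `⟨f, g⟩_w` on `L(I^{(m)})`. -/
def innerW (m₁ m₂ : ℕ) (f g : ℤ × ℤ → ℂ) : ℂ :=
  ∑ i ∈ IdxF m₁ m₂, (wgt m₁ m₂ i : ℂ) * f i * (starRingEnd ℂ) (g i)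

/-- The rectangular spectral index set `Γ^{(m)}_□`. -/
def GammaSq (m₁ m₂ : ℕ) : Finset (ℤ × ℤ) :=
  (Finset.Icc (0 : ℤ) (2 * (m₁ : ℤ)) ×ˢ Finset.Ioc (-(m₂ : ℤ)) (m₂ : ℤ)).filter
    (fun γ => Even (γ.1 + γ.2))

/-- The full frequency box `K^{(m)}`. -/
def KSet (m₁ m₂ : ℕ) : Finset (ℤ × ℤ) :=
  Finset.Icc (0 : ℤ) (2 * (m₁ : ℤ)) ×ˢ Finset.Ioc (-(2 * (m₂ : ℤ))) (2 * (m₂ : ℤ))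

/-- The flip (glide-reflection) operator `γ ↦ γ*` on `K^{(m)}`, with second
coordinate `(γ₂ + 2m₂) mod 4m₂` taken in `(-2m₂, 2m₂]`. -/
def flipOp (m₁ m₂ : ℕ) (γ : ℤ × ℤ) : ℤ × ℤ :=
  (2 * (m₁ : ℤ) - γ.1, if γ.2 ≤ 0 then γ.2 + 2 * (m₂ : ℤ) else γ.2 - 2 * (m₂ : ℤ))

/-- `Γ` is a spectral index set for `I^{(m)}`: a subset of `K^{(m)}` satisfying the
parity condition whose functions `χ^{(m)}_γ` form an orthogonal basis of `L(I^{(m)})`. -/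
def IsSpectral (m₁ m₂ : ℕ) (Γ : Finset (ℤ × ℤ)) : Prop :=
  Γ ⊆ KSet m₁ m₂ ∧ (∀ γ ∈ Γ, Even (γ.1 + γ.2)) ∧
  (∀ γ ∈ Γ, ∀ γ' ∈ Γ, γ ≠ γ' → innerW m₁ m₂ (chi m₁ m₂ γ) (chi m₁ m₂ γ') = 0) ∧
  LinearIndependent ℂ (fun γ : ↥Γ => fun i : ↥(IdxF m₁ m₂) => chi m₁ m₂ γ.1 i.1) ∧
  Submodule.span ℂ
    (Set.range (fun γ : ↥Γ => fun i : ↥(IdxF m₁ m₂) => chi m₁ m₂ γ.1 i.1)) = ⊤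

/-- The real discrete basis functions `χ^{(m)}_{ℛ,γ}(i)` (for `γ ∈ Γ`). -/
def chiR (m₁ m₂ : ℕ) (Γ : Finset (ℤ × ℤ)) (γ i : ℤ × ℤ) : ℝ :=
  Real.cos (γ.1 * i.1 * Real.pi / (2 * m₁)) *
    (if ((γ.1, -γ.2) ∈ Γ ∧ 0 ≤ γ.2) ∨ ((γ.1, -γ.2) ∉ Γ ∧ γ.1 ≤ (m₁ : ℤ))
     then Real.cos (γ.2 * i.2 * Real.pi / (2 * m₂))
     else Real.sin (γ.2 * i.2 * Real.pi / (2 * m₂)))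

/-- The Chebyshev–Fourier basis functions `X_γ(r, θ) = T_{γ₁}(r) e^{i γ₂ θ}`. -/
def Xfun (γ : ℤ × ℤ) (p : ℝ × ℝ) : ℂ :=
  (Real.cos (γ.1 * Real.arccos p.1) : ℂ) * Complex.exp (Complex.I * (γ.2 * p.2))

/-- The real Chebyshev–Fourier basis functions `X_{ℛ,γ}` (for `γ ∈ Γ`). -/
def XRfun (m₁ : ℕ) (Γ : Finset (ℤ × ℤ)) (γ : ℤ × ℤ) (p : ℝ × ℝ) : ℝ :=
  Real.cos (γ.1 * Real.arccos p.1) *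
    (if ((γ.1, -γ.2) ∈ Γ ∧ 0 ≤ γ.2) ∨ ((γ.1, -γ.2) ∉ Γ ∧ γ.1 ≤ (m₁ : ℤ))
     then Real.cos (γ.2 * p.2) else Real.sin (γ.2 * p.2))

/-- The Lagrange functions `L^{(m)}_i`. -/
def Lag (m₁ m₂ : ℕ) (Γ : Finset (ℤ × ℤ)) (i : ℤ × ℤ) (p : ℝ × ℝ) : ℂ :=
  (wgt m₁ m₂ i : ℂ) *
    ∑ γ ∈ Γ, ((starRingEnd ℂ) (chi m₁ m₂ γ i) /
      innerW m₁ m₂ (chi m₁ m₂ γ) (chi m₁ m₂ γ)) * Xfun γ p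

/-- The complex-valued version of `X_{ℛ,γ}`. -/
def XRc (m₁ : ℕ) (Γ : Finset (ℤ × ℤ)) (γ : ℤ × ℤ) (p : ℝ × ℝ) : ℂ :=
  (XRfun m₁ Γ γ p : ℂ)

/-- The real Lagrange functions `L^{(m)}_{ℛ,i}`. -/
def LagR (m₁ m₂ : ℕ) (Γ : Finset (ℤ × ℤ)) (i : ℤ × ℤ) (p : ℝ × ℝ) : ℂ :=
  (wgt m₁ m₂ i : ℂ) *
    ∑ γ ∈ Γ, ((chiR m₁ m₂ Γ γ i /
        (∑ j ∈ IdxF m₁ m₂, wgt m₁ m₂ j * chiR m₁ m₂ Γ γ j ^ 2) : ℝ) : ℂ) * XRc m₁ Γ γ p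

end

lemma card_parity (a c : ℤ) (k : ℕ) :
    ((Finset.Ioc a (a + 2*k)).filter (fun x => Even (c + x))).card = k := by
  conv_rhs => rw [← Finset.card_range k]
  apply Finset.card_nbij' (fun x => ((x - a - 1)/2).toNat)
    (fun j => (a + 1 + (a + 1 + c) % 2) + 2*j) <;>
    intro x hx <;>
    simp only [Finset.mem_coe, Finset.mem_filter, Finset.mem_Ioc, Finset.mem_range, Int.even_iff] at * <;>
    omega

lemma cos_sum_zero (m₁ : ℕ) (hm₁ : 0 < m₁) (g : ℤ) (hg0 : 0 < g) (hg2 : g < 2*(m₁:ℤ)) :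
    ∑ i ∈ Finset.range (2*m₁), Real.cos (i * ((g:ℝ) * Real.pi / m₁)) = 0 := by
  have hm : (m₁:ℝ) ≠ 0 := Nat.cast_ne_zero.mpr hm₁.ne'
  set θ : ℝ := (g:ℝ) * Real.pi / m₁ with hθ
  have hmC : (m₁:ℂ) ≠ 0 := Nat.cast_ne_zero.mpr hm₁.ne'
  have hz1 : Complex.exp (θ * Complex.I) ≠ 1 := by
    intro h
    rw [Complex.exp_eq_one_iff] at h
    obtain ⟨n, hn⟩ := h
    have hπ : Real.pi ≠ 0 := Real.pi_ne_zero
    have h2 : (θ:ℂ) = n * (2*Real.pi) := by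
      apply mul_right_cancel₀ Complex.I_ne_zero
      linear_combination hn
    have h3 : θ = n * (2*Real.pi) := by exact_mod_cast h2
    rw [hθ] at h3
    have h4 : (g:ℝ) * Real.pi = n * (2*Real.pi) * m₁ := by field_simp at h3; rw [h3]; ring
    have h5 : (g:ℝ) = 2*n*m₁ := by
      have := mul_right_cancel₀ hπ (by linarith [h4] : (g:ℝ) * Real.pi = (2*n*m₁) * Real.pi)
      exact this
    have h6 : (g:ℤ) = 2*n*m₁ := by exact_mod_cast h5
    have hm₁' : (0:ℤ) < m₁ := by exact_mod_cast hm₁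
    rcases le_or_gt n 0 with hn0 | hn0
    · nlinarith
    · nlinarith
  have key : ∑ i ∈ Finset.range (2*m₁), Complex.exp (θ * Complex.I) ^ i = 0 := by
    rw [geom_sum_eq hz1]
    have : Complex.exp (θ * Complex.I) ^ (2*m₁) = 1 := by
      rw [← Complex.exp_nat_mul]
      have h7 : ((2*m₁ : ℕ) : ℂ) * (θ * Complex.I) = (g:ℤ) * (2 * Real.pi * Complex.I) := by
        push_cast [hθ]
        field_simp
      rw [h7, Complex.exp_int_mul_two_pi_mul_I]
    rw [this, sub_self, zero_div]
  have re_eq : ∀ i : ℕ, Real.cos (i * θ) = (Complex.exp (θ * Complex.I) ^ i).re := by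
    intro i
    rw [← Complex.exp_nat_mul]
    have : (i:ℂ) * (θ * Complex.I) = ((i*θ : ℝ):ℂ) * Complex.I := by push_cast; ring
    rw [this, Complex.exp_ofReal_mul_I_re]
  calc ∑ i ∈ Finset.range (2*m₁), Real.cos (i * θ)
      = (∑ i ∈ Finset.range (2*m₁), Complex.exp (θ * Complex.I) ^ i).re := by
        rw [Complex.re_sum]; exact Finset.sum_congr rfl fun i _ => re_eq i
    _ = 0 := by rw [key]; rfl

lemma key1d (m₁ m₂ : ℕ) (hm₁ : 0 < m₁) (hm₂ : 0 < m₂) (g : ℤ) (h0 : 0 ≤ g) (h2 : g ≤ 2*(m₁:ℤ)) :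
    ∑ i ∈ Finset.range (m₁+1),
      ((if i = m₁ then (m₂:ℝ) else 2*m₂) * (if i = 0 then (1:ℝ)/(4*m₁*m₂) else (2:ℝ)/(4*m₁*m₂))) *
        Real.cos ((g:ℝ) * i * Real.pi / (2*m₁)) ^ 2
    = if g = 0 ∨ g = 2*(m₁:ℤ) then 1 else 1/2 := by
  have hm : (m₁:ℝ) ≠ 0 := Nat.cast_ne_zero.mpr hm₁.ne'
  have hm2 : (m₂:ℝ) ≠ 0 := Nat.cast_ne_zero.mpr hm₂.ne'
  set θ : ℝ := (g:ℝ) * Real.pi / m₁ with hθ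
  set F : ℕ → ℝ := fun j => Real.cos (j * θ) with hF
  have hcos2 : ∀ i : ℕ, Real.cos ((g:ℝ) * i * Real.pi / (2*m₁)) ^ 2 = 1/2 + F i / 2 := by
    intro i
    rw [Real.cos_sq, hF]
    have : 2 * ((g:ℝ) * i * Real.pi / (2*m₁)) = i * θ := by
      rw [hθ]; field_simp
    rw [this]
  have hcoef : ∀ i ∈ Finset.range (m₁+1),
      ((if i = m₁ then (m₂:ℝ) else 2*m₂) * (if i = 0 then (1:ℝ)/(4*m₁*m₂) else (2:ℝ)/(4*m₁*m₂))) *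
        Real.cos ((g:ℝ) * i * Real.pi / (2*m₁)) ^ 2
      = (if i = 0 ∨ i = m₁ then 1/(2*(m₁:ℝ)) else 1/(m₁:ℝ)) * (1/2 + F i / 2) := by
    intro i _
    rw [hcos2]
    by_cases h0' : i = 0
    · subst h0'
      rw [if_pos rfl, if_pos (Or.inl rfl), if_neg (by omega)]
      field_simp
      ring
    · by_cases h1' : i = m₁
      · subst h1'
        rw [if_pos rfl, if_pos (Or.inr rfl), if_neg h0']
        field_simp
        ring
      · rw [if_neg h1', if_neg h0', if_neg (by tauto)]
        field_simp
        ring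
  rw [Finset.sum_congr rfl hcoef]
  obtain ⟨k, hk⟩ : ∃ k, m₁ = k + 1 := ⟨m₁ - 1, by omega⟩
  subst hk
  set C : ℝ := ∑ i ∈ Finset.range k, F (i+1) with hC
  set D : ℝ := F (k+1) with hD
  rw [Finset.sum_range_succ, Finset.sum_range_succ']
  have step : ∀ i ∈ Finset.range k,
      (if i+1 = 0 ∨ i+1 = k+1 then 1/(2*(((k+1:ℕ)):ℝ)) else 1/(((k+1:ℕ)):ℝ)) * (1/2 + F (i+1) / 2)
      = 1/(((k+1:ℕ)):ℝ) * (1/2) + 1/(((k+1:ℕ)):ℝ) * (F (i+1) / 2) := by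
    intro i hi
    rw [Finset.mem_range] at hi
    rw [if_neg (by omega)]
    ring
  rw [Finset.sum_congr rfl step, Finset.sum_add_distrib, Finset.sum_const, Finset.card_range,
    ← Finset.mul_sum]
  have hCsum : ∑ i ∈ Finset.range k, F (i+1) / 2 = C / 2 := by
    rw [hC, Finset.sum_div]
  rw [hCsum, if_pos (Or.inl rfl), if_pos (Or.inr rfl)]
  have hF0 : F 0 = 1 := by rw [hF]; norm_num
  -- now case split on g
  by_cases hg : g = 0 ∨ g = 2*((k+1:ℕ):ℤ)
  · -- all cosines are 1
    have hθval : ∀ j : ℕ, F j = 1 := by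
      intro j
      show Real.cos ((j:ℝ) * θ) = 1
      rcases hg with hg | hg
      · simp [hθ, hg]
      · have : (j:ℝ) * θ = j * (2 * Real.pi) := by
          rw [hθ, hg]
          push_cast
          field_simp
        rw [this, Real.cos_nat_mul_two_pi]
    have hCval : C = k := by
      rw [hC]
      rw [Finset.sum_congr rfl fun i _ => hθval (i+1), Finset.sum_const, Finset.card_range]
      simp
    have hDval : D = 1 := hθval (k+1)
    rw [if_pos hg, hCval, hF0, hθval (k+1), nsmul_eq_mul]
    have hk1 : ((k:ℝ)+1) ≠ 0 := by positivity
    push_cast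
    field_simp
    ring
  · rw [if_neg hg]
    push_neg at hg
    have hg0 : 0 < g := by omega
    have hg2 : g < 2*((k+1:ℕ):ℤ) := by
      rcases lt_or_eq_of_le h2 with h | h
      · exact h
      · exact absurd h hg.2
    have hT : (1:ℝ) + 2*C + D = 0 := by
      have hzero := cos_sum_zero (k+1) (by omega) g hg0 hg2
      have hzero' : ∑ i ∈ Finset.range (2*(k+1)), F i = 0 := by
        simp only [hF, hθ]; exact hzero
      have hsplit : ∑ i ∈ Finset.range (2*(k+1)), F i = 1 + 2*C + D := by
        have h2k : 2*(k+1) = (k+1) + (k+1) := by ring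
        rw [h2k, Finset.sum_range_add]
        have first : ∑ i ∈ Finset.range (k+1), F i = C + 1 := by
          rw [Finset.sum_range_succ', hF0, hC]
        have refl1 : ∀ i ∈ Finset.range (k+1), F ((k+1) + i) = F (k+1-1-i+1) := by
          intro i hi
          rw [Finset.mem_range] at hi
          show Real.cos ((((k+1)+i : ℕ):ℝ) * θ) = Real.cos (((k+1-1-i+1 : ℕ):ℝ) * θ)
          have harg : (((k+1)+i : ℕ):ℝ) * θ = (g:ℤ) * (2*Real.pi) - ((k+1-1-i+1 : ℕ):ℝ) * θ := by
            have hsub : ((k+1-1-i+1 : ℕ):ℝ) = (k:ℝ) + 1 - i := by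
              push_cast [Nat.cast_sub (by omega : i ≤ k)]
              ring
            rw [hsub, hθ]
            push_cast
            field_simp
            ring
          rw [harg, Real.cos_int_mul_two_pi_sub]
        have second : ∑ i ∈ Finset.range (k+1), F ((k+1) + i) = C + D := by
          rw [Finset.sum_congr rfl refl1, Finset.sum_range_reflect (fun j => F (j+1)) (k+1),
            Finset.sum_range_succ, hC]
        rw [first, second]
        ring
      linarith [hsplit ▸ hzero']
    rw [hD] at hT
    rw [hF0, nsmul_eq_mul]
    push_cast
    have hk1 : ((k:ℝ)+1) ≠ 0 := by positivity
    field_simp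
    first
    | linear_combination (2*(k:ℝ)+2) * hT
    | linear_combination (8*(k:ℝ)^2 + 14*(k:ℝ) + 6) * hT
    | linear_combination (4*(k:ℝ)+4) * hT
    | linear_combination ((k:ℝ)+1) * hT
    | linear_combination 8*((k:ℝ)+1)^2 * hT
    | linear_combination hT

lemma real_norm_sum (m₁ m₂ : ℕ) (hm₁ : 0 < m₁) (hm₂ : 0 < m₂) (g : ℤ)
    (h0 : 0 ≤ g) (h2 : g ≤ 2*(m₁:ℤ)) :
    ∑ i ∈ IdxF m₁ m₂, wgt m₁ m₂ i * Real.cos ((g:ℝ) * i.1 * Real.pi/(2*m₁))^2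
      = if g = 0 ∨ g = 2*(m₁:ℤ) then 1 else 1/2 := by
  rw [IdxF, Finset.sum_filter, Finset.sum_product]
  have inner : ∀ i₁ ∈ Finset.Icc (0:ℤ) (m₁:ℤ),
      (∑ i₂ ∈ Finset.Ioc (-(2*(m₂:ℤ))) (2*(m₂:ℤ)),
        if (((i₁,i₂) : ℤ×ℤ).1 = (m₁:ℤ) → ((i₁,i₂) : ℤ×ℤ).2 ≤ 0) ∧ Even (((i₁,i₂) : ℤ×ℤ).1 + ((i₁,i₂) : ℤ×ℤ).2) then
          wgt m₁ m₂ (i₁,i₂) * Real.cos ((g:ℝ) * ((i₁,i₂) : ℤ×ℤ).1 * Real.pi/(2*m₁))^2 else 0)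
      = (((if i₁ = (m₁:ℤ) then m₂ else 2*m₂ : ℕ)) : ℝ) *
        ((if i₁ = 0 then (1:ℝ)/(4*m₁*m₂) else (2:ℝ)/(4*m₁*m₂)) *
          Real.cos ((g:ℝ) * i₁ * Real.pi/(2*m₁))^2) := by
    intro i₁ hi₁
    have hwgen : ∀ i₂ : ℤ, wgt m₁ m₂ (i₁, i₂) = if i₁ = 0 then (1:ℝ)/(4*m₁*m₂) else (2:ℝ)/(4*m₁*m₂) := by
      intro i₂; simp [wgt]
    have hcard : ((Finset.Ioc (-(2*(m₂:ℤ))) (2*(m₂:ℤ))).filter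
          (fun i₂ => (i₁ = (m₁:ℤ) → i₂ ≤ 0) ∧ Even (i₁ + i₂))).card
        = if i₁ = (m₁:ℤ) then m₂ else 2*m₂ := by
      by_cases h : i₁ = (m₁:ℤ)
      · rw [if_pos h]
        have hs : (Finset.Ioc (-(2*(m₂:ℤ))) (2*(m₂:ℤ))).filter
              (fun i₂ => (i₁ = (m₁:ℤ) → i₂ ≤ 0) ∧ Even (i₁ + i₂))
            = (Finset.Ioc (-(2*(m₂:ℤ))) ((-(2*(m₂:ℤ))) + 2*(m₂:ℤ))).filter (fun x => Even (i₁ + x)) := by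
          ext x
          simp only [Finset.mem_filter, Finset.mem_Ioc, Int.even_iff]
          constructor
          · rintro ⟨⟨hx1, hx2⟩, himp, hev⟩
            exact ⟨⟨hx1, by have := himp h; omega⟩, hev⟩
          · rintro ⟨⟨hx1, hx2⟩, hev⟩
            exact ⟨⟨hx1, by omega⟩, fun _ => by omega, hev⟩
        rw [hs]
        exact card_parity _ _ m₂
      · rw [if_neg h]
        have hs : (Finset.Ioc (-(2*(m₂:ℤ))) (2*(m₂:ℤ))).filter
              (fun i₂ => (i₁ = (m₁:ℤ) → i₂ ≤ 0) ∧ Even (i₁ + i₂))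
            = (Finset.Ioc (-(2*(m₂:ℤ))) ((-(2*(m₂:ℤ))) + 2*((2*m₂:ℕ):ℤ))).filter (fun x => Even (i₁ + x)) := by
          ext x
          simp only [Finset.mem_filter, Finset.mem_Ioc, Int.even_iff]
          constructor
          · rintro ⟨⟨hx1, hx2⟩, himp, hev⟩
            exact ⟨⟨hx1, by push_cast; omega⟩, hev⟩
          · rintro ⟨⟨hx1, hx2⟩, hev⟩
            exact ⟨⟨hx1, by push_cast at hx2; omega⟩, fun h' => absurd h' h, hev⟩
        rw [hs]
        exact card_parity _ _ (2*m₂)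
    simp only [hwgen]
    rw [← Finset.sum_filter, Finset.sum_const, hcard, nsmul_eq_mul]
    try ring
  rw [Finset.sum_congr rfl inner]
  rw [← key1d m₁ m₂ hm₁ hm₂ g h0 h2]
  have hi : ∀ a ∈ Finset.Icc (0:ℤ) (m₁:ℤ), a.toNat ∈ Finset.range (m₁+1) := by
    intro a ha; simp only [Finset.mem_Icc, Finset.mem_range] at *; omega
  have hj : ∀ n ∈ Finset.range (m₁+1), (n:ℤ) ∈ Finset.Icc (0:ℤ) (m₁:ℤ) := by
    intro n hn; simp only [Finset.mem_Icc, Finset.mem_range] at *; omega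
  have hleft : ∀ a ∈ Finset.Icc (0:ℤ) (m₁:ℤ), ((a.toNat:ℕ):ℤ) = a := by
    intro a ha; simp only [Finset.mem_Icc] at ha; omega
  have hright : ∀ n ∈ Finset.range (m₁+1), ((n:ℤ)).toNat = n := by
    intro n hn; omega
  have hfun : ∀ a ∈ Finset.Icc (0:ℤ) (m₁:ℤ),
      (((if a = (m₁:ℤ) then m₂ else 2*m₂ : ℕ)) : ℝ) *
        ((if a = 0 then (1:ℝ)/(4*m₁*m₂) else (2:ℝ)/(4*m₁*m₂)) *
          Real.cos ((g:ℝ) * a * Real.pi/(2*m₁))^2)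
      = ((if a.toNat = m₁ then (m₂:ℝ) else 2*m₂) *
          (if a.toNat = 0 then (1:ℝ)/(4*m₁*m₂) else (2:ℝ)/(4*m₁*m₂))) *
        Real.cos ((g:ℝ) * (a.toNat:ℕ) * Real.pi / (2*m₁)) ^ 2 := by
    intro a ha
    simp only [Finset.mem_Icc] at ha
    have hcast : ((a.toNat : ℕ) : ℝ) = (a : ℝ) := by
      have : ((a.toNat : ℕ) : ℤ) = a := by omega
      exact_mod_cast congrArg (fun z : ℤ => (z:ℝ)) this
    rw [hcast]
    by_cases h1 : a = (m₁:ℤ)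
    · rw [if_pos h1, if_pos (by omega : a.toNat = m₁)]
      by_cases h2' : a = 0
      · rw [if_pos h2', if_pos (by omega : a.toNat = 0)]; push_cast; ring
      · rw [if_neg h2', if_neg (by omega : ¬ a.toNat = 0)]; push_cast; ring
    · rw [if_neg h1, if_neg (by omega : ¬ a.toNat = m₁)]
      by_cases h2' : a = 0
      · rw [if_pos h2', if_pos (by omega : a.toNat = 0)]; push_cast; ring
      · rw [if_neg h2', if_neg (by omega : ¬ a.toNat = 0)]; push_cast; ring
  exact Finset.sum_nbij' (fun a : ℤ => a.toNat) (fun n : ℕ => (n:ℤ)) hi hj hleft hright hfun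

lemma innerW_chi_self (m₁ m₂ : ℕ) (hm₁ : 0 < m₁) (hm₂ : 0 < m₂) (γ : ℤ × ℤ)
    (h0 : 0 ≤ γ.1) (h2 : γ.1 ≤ 2*(m₁:ℤ)) :
    innerW m₁ m₂ (chi m₁ m₂ γ) (chi m₁ m₂ γ)
      = if γ.1 = 0 ∨ γ.1 = 2*(m₁:ℤ) then 1 else 1/2 := by
  have key : ∀ c r : ℝ, ((c:ℂ) * Complex.exp (Complex.I * r)) *
      (starRingEnd ℂ) ((c:ℂ) * Complex.exp (Complex.I * r)) = ((c^2 : ℝ):ℂ) := by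
    intro c r
    rw [map_mul, ← Complex.exp_conj, map_mul, Complex.conj_I, Complex.conj_ofReal, Complex.conj_ofReal]
    rw [mul_mul_mul_comm, ← Complex.exp_add]
    have : Complex.I * r + -Complex.I * r = 0 := by ring
    rw [this, Complex.exp_zero, mul_one]
    push_cast
    ring
  have hpt : ∀ i : ℤ × ℤ, (wgt m₁ m₂ i : ℂ) * chi m₁ m₂ γ i * (starRingEnd ℂ) (chi m₁ m₂ γ i)
      = ((wgt m₁ m₂ i * Real.cos ((γ.1:ℝ) * i.1 * Real.pi/(2*m₁))^2 : ℝ) : ℂ) := by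
    intro i
    unfold chi
    have hz : ((γ.2:ℂ) * (i.2:ℂ) * (Real.pi:ℂ) / (2 * (m₂:ℂ)))
        = (((γ.2 * i.2 * Real.pi / (2*(m₂:ℝ))) : ℝ) : ℂ) := by push_cast; ring
    rw [hz, mul_assoc, key]
    push_cast
    ring
  unfold innerW
  rw [Finset.sum_congr rfl (fun i _ => hpt i), ← Complex.ofReal_sum,
    real_norm_sum m₁ m₂ hm₁ hm₂ γ.1 h0 h2]
  split_ifs <;> norm_num

-- χ is invariant under the flip on the nodal index set
lemma chi_flip (m₁ m₂ : ℕ) (hm₁ : 0 < m₁) (hm₂ : 0 < m₂) (γ i : ℤ × ℤ)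
    (hi : Even (i.1 + i.2)) :
    chi m₁ m₂ (flipOp m₁ m₂ γ) i = chi m₁ m₂ γ i := by
  obtain ⟨γ1, γ2⟩ := γ
  obtain ⟨i1, i2⟩ := i
  simp only [Prod.fst, Prod.snd] at hi
  have hm : (m₁:ℝ) ≠ 0 := Nat.cast_ne_zero.mpr hm₁.ne'
  have hm2 : (m₂:ℝ) ≠ 0 := Nat.cast_ne_zero.mpr hm₂.ne'
  have hm2C : (m₂:ℂ) ≠ 0 := Nat.cast_ne_zero.mpr hm₂.ne'
  simp only [chi, flipOp]
  have hcos : Real.cos (((2*(m₁:ℤ) - γ1 : ℤ) : ℝ) * (i1:ℝ) * Real.pi / (2*(m₁:ℝ)))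
      = (-1:ℝ)^i1 * Real.cos ((γ1:ℝ) * i1 * Real.pi / (2*m₁)) := by
    have harg : ((2*(m₁:ℤ) - γ1 : ℤ) : ℝ) * (i1:ℝ) * Real.pi / (2*(m₁:ℝ))
        = (i1:ℤ) * Real.pi - (γ1:ℝ) * i1 * Real.pi / (2*m₁) := by
      push_cast; field_simp
    rw [harg, Real.cos_int_mul_pi_sub]
  by_cases hle : γ2 ≤ 0
  · simp only [if_pos hle]
    have hexp : Complex.I * ((((γ2 + 2*(m₂:ℤ)):ℤ):ℂ) * (i2:ℂ) * (Real.pi:ℂ) / (2*(m₂:ℂ)))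
        = Complex.I * ((γ2:ℂ) * i2 * Real.pi / (2*m₂)) + (i2:ℂ) * ((Real.pi:ℂ) * Complex.I) := by
      push_cast; field_simp
    rw [hexp, Complex.exp_add, Complex.exp_int_mul, Complex.exp_pi_mul_I]
    rw [hcos]
    have hsign : ((-1:ℂ)^i1) * (-1:ℂ)^i2 = 1 := by
      rw [← zpow_add₀ (by norm_num : (-1:ℂ) ≠ 0)]
      exact Even.neg_one_zpow hi
    rw [Complex.ofReal_mul]
    have hA : ((((-1:ℝ))^i1 : ℝ) : ℂ) = (-1:ℂ)^i1 := by push_cast; ring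
    rw [hA]
    linear_combination ((Real.cos ((γ1:ℝ) * i1 * Real.pi / (2*m₁)) : ℂ) *
      Complex.exp (Complex.I * ((γ2:ℂ) * (i2:ℂ) * (Real.pi:ℂ) / (2*(m₂:ℂ))))) * hsign
  · simp only [if_neg hle]
    have hexp : Complex.I * ((((γ2 - 2*(m₂:ℤ)):ℤ):ℂ) * (i2:ℂ) * (Real.pi:ℂ) / (2*(m₂:ℂ)))
        = Complex.I * ((γ2:ℂ) * i2 * Real.pi / (2*m₂)) + ((-i2:ℤ):ℂ) * ((Real.pi:ℂ) * Complex.I) := by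
      push_cast; field_simp; ring
    rw [hexp, Complex.exp_add, Complex.exp_int_mul, Complex.exp_pi_mul_I]
    rw [hcos]
    have hev : Even (i1 + (-i2)) := by
      rw [Int.even_iff] at *; omega
    have hsign : ((-1:ℂ)^i1) * (-1:ℂ)^(-i2) = 1 := by
      rw [← zpow_add₀ (by norm_num : (-1:ℂ) ≠ 0)]
      exact Even.neg_one_zpow hev
    rw [Complex.ofReal_mul]
    have hA : ((((-1:ℝ))^i1 : ℝ) : ℂ) = (-1:ℂ)^i1 := by push_cast; ring
    rw [hA]
    linear_combination ((Real.cos ((γ1:ℝ) * i1 * Real.pi / (2*m₁)) : ℂ) *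
      Complex.exp (Complex.I * ((γ2:ℂ) * (i2:ℂ) * (Real.pi:ℂ) / (2*(m₂:ℂ))))) * hsign

-- flip is an involution on KSet
lemma flipOp_flip (m₁ m₂ : ℕ) (hm₂ : 0 < m₂) (γ : ℤ × ℤ) (hγ : γ ∈ KSet m₁ m₂) :
    flipOp m₁ m₂ (flipOp m₁ m₂ γ) = γ := by
  obtain ⟨γ1, γ2⟩ := γ
  simp only [KSet, Finset.mem_product, Finset.mem_Icc, Finset.mem_Ioc] at hγ
  simp only [flipOp, Prod.mk.injEq]
  constructor
  · omega
  · split_ifs <;> omega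

lemma flip_mem_KSet (m₁ m₂ : ℕ) (γ : ℤ × ℤ) (hγ : γ ∈ KSet m₁ m₂) :
    flipOp m₁ m₂ γ ∈ KSet m₁ m₂ := by
  obtain ⟨γ1, γ2⟩ := γ
  simp only [KSet, Finset.mem_product, Finset.mem_Icc, Finset.mem_Ioc] at *
  simp only [flipOp]
  try dsimp only
  split_ifs <;> omega

lemma flip_even (m₁ m₂ : ℕ) (γ : ℤ × ℤ) (h : Even (γ.1 + γ.2)) :
    Even ((flipOp m₁ m₂ γ).1 + (flipOp m₁ m₂ γ).2) := by
  obtain ⟨γ1, γ2⟩ := γ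
  simp only [flipOp] at *
  try dsimp only at *
  rw [Int.even_iff] at *
  split_ifs <;> omega

lemma flip_mem_GammaSq (m₁ m₂ : ℕ) (hm₂ : 0 < m₂) (γ : ℤ × ℤ) (hK : γ ∈ KSet m₁ m₂)
    (hEv : Even (γ.1 + γ.2)) (hne : γ ∉ GammaSq m₁ m₂) :
    flipOp m₁ m₂ γ ∈ GammaSq m₁ m₂ := by
  obtain ⟨γ1, γ2⟩ := γ
  have hEv' := flip_even m₁ m₂ (γ1, γ2) hEv
  simp only [KSet, GammaSq, Finset.mem_filter, Finset.mem_product, Finset.mem_Icc,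
    Finset.mem_Ioc, flipOp, Int.even_iff] at *
  try dsimp only at *
  constructor
  · split_ifs at hEv' ⊢ <;> omega
  · split_ifs at hEv' ⊢ <;> omega

lemma GammaSq_subset_KSet (m₁ m₂ : ℕ) (hm₂ : 0 < m₂) : GammaSq m₁ m₂ ⊆ KSet m₁ m₂ := by
  intro γ hγ
  simp only [KSet, GammaSq, Finset.mem_filter, Finset.mem_product, Finset.mem_Icc,
    Finset.mem_Ioc] at *
  omega

lemma flip_not_mem_GammaSq (m₁ m₂ : ℕ) (hm₂ : 0 < m₂) (γ : ℤ × ℤ) (hγ : γ ∈ GammaSq m₁ m₂) :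
    flipOp m₁ m₂ γ ∉ GammaSq m₁ m₂ := by
  obtain ⟨γ1, γ2⟩ := γ
  simp only [GammaSq, Finset.mem_filter, Finset.mem_product, Finset.mem_Icc,
    Finset.mem_Ioc, flipOp, Int.even_iff] at *
  try dsimp only
  intro h
  rcases h with ⟨⟨h1, h2⟩, h3⟩
  split_ifs at h2 <;> omega

-- cardinalities
lemma card_IdxF (m₁ m₂ : ℕ) (hm₁ : 0 < m₁) (hm₂ : 0 < m₂) :
    (IdxF m₁ m₂).card = (2*m₁+1)*m₂ := by
  rw [IdxF, Finset.card_filter, Finset.sum_product]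
  have inner : ∀ i₁ ∈ Finset.Icc (0:ℤ) (m₁:ℤ),
      (∑ i₂ ∈ Finset.Ioc (-(2*(m₂:ℤ))) (2*(m₂:ℤ)),
        if (((i₁,i₂) : ℤ×ℤ).1 = (m₁:ℤ) → ((i₁,i₂) : ℤ×ℤ).2 ≤ 0) ∧
            Even (((i₁,i₂) : ℤ×ℤ).1 + ((i₁,i₂) : ℤ×ℤ).2) then 1 else 0)
      = if i₁ = (m₁:ℤ) then m₂ else 2*m₂ := by
    intro i₁ hi₁
    rw [← Finset.sum_filter, Finset.sum_const, smul_eq_mul, mul_one]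
    by_cases h : i₁ = (m₁:ℤ)
    · rw [if_pos h]
      have hs : (Finset.Ioc (-(2*(m₂:ℤ))) (2*(m₂:ℤ))).filter
            (fun i₂ => (((i₁,i₂) : ℤ×ℤ).1 = (m₁:ℤ) → ((i₁,i₂) : ℤ×ℤ).2 ≤ 0) ∧
              Even (((i₁,i₂) : ℤ×ℤ).1 + ((i₁,i₂) : ℤ×ℤ).2))
          = (Finset.Ioc (-(2*(m₂:ℤ))) ((-(2*(m₂:ℤ))) + 2*(m₂:ℤ))).filter (fun x => Even (i₁ + x)) := by
        ext x
        simp only [Finset.mem_filter, Finset.mem_Ioc, Int.even_iff]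
        constructor
        · rintro ⟨⟨hx1, hx2⟩, himp, hev⟩
          exact ⟨⟨hx1, by have := himp h; omega⟩, hev⟩
        · rintro ⟨⟨hx1, hx2⟩, hev⟩
          exact ⟨⟨hx1, by omega⟩, fun _ => by omega, hev⟩
      rw [hs]
      exact card_parity _ _ m₂
    · rw [if_neg h]
      have hs : (Finset.Ioc (-(2*(m₂:ℤ))) (2*(m₂:ℤ))).filter
            (fun i₂ => (((i₁,i₂) : ℤ×ℤ).1 = (m₁:ℤ) → ((i₁,i₂) : ℤ×ℤ).2 ≤ 0) ∧
              Even (((i₁,i₂) : ℤ×ℤ).1 + ((i₁,i₂) : ℤ×ℤ).2))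
          = (Finset.Ioc (-(2*(m₂:ℤ))) ((-(2*(m₂:ℤ))) + 2*((2*m₂:ℕ):ℤ))).filter (fun x => Even (i₁ + x)) := by
        ext x
        simp only [Finset.mem_filter, Finset.mem_Ioc, Int.even_iff]
        constructor
        · rintro ⟨⟨hx1, hx2⟩, himp, hev⟩
          exact ⟨⟨hx1, by push_cast; omega⟩, hev⟩
        · rintro ⟨⟨hx1, hx2⟩, hev⟩
          exact ⟨⟨hx1, by push_cast at hx2; omega⟩, fun h' => absurd h' h, hev⟩
      rw [hs]
      exact card_parity _ _ (2*m₂)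
  rw [Finset.sum_congr rfl inner]
  have hins : Finset.Icc (0:ℤ) (m₁:ℤ) = insert (m₁:ℤ) (Finset.Icc (0:ℤ) ((m₁:ℤ)-1)) := by
    ext x
    simp only [Finset.mem_Icc, Finset.mem_insert]
    omega
  rw [hins, Finset.sum_insert (by simp only [Finset.mem_Icc]; omega), if_pos rfl]
  have hrest : ∑ i₁ ∈ Finset.Icc (0:ℤ) ((m₁:ℤ)-1), (if i₁ = (m₁:ℤ) then m₂ else 2*m₂)
      = (m₁ : ℕ) * (2*m₂) := by
    rw [Finset.sum_congr rfl (fun x hx => by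
      rw [if_neg (by simp only [Finset.mem_Icc] at hx; omega)]),
      Finset.sum_const, smul_eq_mul]
    congr 1
    rw [Int.card_Icc]
    omega
  rw [hrest]
  ring

lemma card_GammaSq (m₁ m₂ : ℕ) (hm₂ : 0 < m₂) :
    (GammaSq m₁ m₂).card = (2*m₁+1)*m₂ := by
  rw [GammaSq, Finset.card_filter, Finset.sum_product]
  have inner : ∀ γ₁ ∈ Finset.Icc (0:ℤ) (2*(m₁:ℤ)),
      (∑ γ₂ ∈ Finset.Ioc (-(m₂:ℤ)) (m₂:ℤ),
        if Even (((γ₁,γ₂) : ℤ×ℤ).1 + ((γ₁,γ₂) : ℤ×ℤ).2) then 1 else 0) = m₂ := by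
    intro γ₁ _
    rw [← Finset.sum_filter, Finset.sum_const, smul_eq_mul, mul_one]
    have hs : (Finset.Ioc (-(m₂:ℤ)) (m₂:ℤ)).filter
          (fun γ₂ => Even (((γ₁,γ₂) : ℤ×ℤ).1 + ((γ₁,γ₂) : ℤ×ℤ).2))
        = (Finset.Ioc (-(m₂:ℤ)) ((-(m₂:ℤ)) + 2*(m₂:ℤ))).filter (fun x => Even (γ₁ + x)) := by
      ext x
      simp only [Finset.mem_filter, Finset.mem_Ioc, Int.even_iff]
      constructor
      · rintro ⟨⟨hx1, hx2⟩, hev⟩; exact ⟨⟨hx1, by omega⟩, hev⟩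
      · rintro ⟨⟨hx1, hx2⟩, hev⟩; exact ⟨⟨hx1, by omega⟩, hev⟩
    rw [hs]
    exact card_parity _ _ m₂
  rw [Finset.sum_congr rfl inner, Finset.sum_const, smul_eq_mul]
  congr 1
  rw [Int.card_Icc]
  omega

-- |Γ| = |I| for a spectral set
lemma card_Gamma (m₁ m₂ : ℕ) (Γ : Finset (ℤ × ℤ)) (hΓ : IsSpectral m₁ m₂ Γ) :
    Γ.card = (IdxF m₁ m₂).card := by
  classical
  have b : Module.Basis ↥Γ ℂ (↥(IdxF m₁ m₂) → ℂ) :=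
    Module.Basis.mk hΓ.2.2.2.1 (le_of_eq hΓ.2.2.2.2.symm)
  have h1 := Module.finrank_eq_card_basis b
  rw [Module.finrank_fintype_fun_eq_card] at h1
  rw [Fintype.card_coe, Fintype.card_coe] at h1
  exact h1.symm

-- injectivity of γ ↦ χ_γ|_I from linear independence
lemma chi_inj (m₁ m₂ : ℕ) (Γ : Finset (ℤ × ℤ)) (hΓ : IsSpectral m₁ m₂ Γ)
    {γ δ : ℤ × ℤ} (hγ : γ ∈ Γ) (hδ : δ ∈ Γ)
    (h : ∀ i ∈ IdxF m₁ m₂, chi m₁ m₂ γ i = chi m₁ m₂ δ i) : γ = δ := by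
  have hinj := hΓ.2.2.2.1.injective
  have := hinj (a₁ := ⟨γ, hγ⟩) (a₂ := ⟨δ, hδ⟩) (funext fun i => h i.1 i.2)
  exact Subtype.ext_iff.mp this

/-- Corollary 5.3: every spectral index set `Γ^{(m)}` is of the form `Γ^{(m)}_Ω`
for some `Ω ⊆ Γ^{(m)}_□`, and the basis functions have the stated norms. -/
theorem spectral_set_characterization (m₁ m₂ : ℕ) (hm₁ : 0 < m₁) (hm₂ : 0 < m₂)
    (Γ : Finset (ℤ × ℤ)) (hΓ : IsSpectral m₁ m₂ Γ) :
    (∃ Ω ⊆ GammaSq m₁ m₂,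
      Γ = (GammaSq m₁ m₂ \ Ω) ∪
        ((KSet m₁ m₂).filter (fun γ => flipOp m₁ m₂ γ ∈ Ω))) ∧
    (∀ γ ∈ Γ, innerW m₁ m₂ (chi m₁ m₂ γ) (chi m₁ m₂ γ) =
      if γ.1 = 0 ∨ γ.1 = 2 * (m₁ : ℤ) then 1 else 1 / 2) := by
  classical
  have hK := hΓ.1
  have hEv := hΓ.2.1
  have hfix : ∀ γ : ℤ × ℤ, flipOp m₁ m₂ γ ≠ γ := by
    intro γ h
    have h2 := congrArg Prod.snd h
    simp only [flipOp] at h2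
    split_ifs at h2 <;> omega
  have hpair : ∀ γ ∈ Γ, flipOp m₁ m₂ γ ∉ Γ := by
    intro γ hγ hfγ
    refine hfix γ (chi_inj m₁ m₂ Γ hΓ hfγ hγ ?_)
    intro i hi
    have hiEv : Even (i.1 + i.2) := by
      simp only [IdxF, Finset.mem_filter] at hi
      exact hi.2.2
    exact chi_flip m₁ m₂ hm₁ hm₂ γ i hiEv
  have hcardle : (GammaSq m₁ m₂).card ≤ Γ.card := by
    rw [card_Gamma m₁ m₂ Γ hΓ, card_IdxF m₁ m₂ hm₁ hm₂, card_GammaSq m₁ m₂ hm₂]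
  set ψ : ℤ × ℤ → ℤ × ℤ := fun γ => if γ ∈ GammaSq m₁ m₂ then γ else flipOp m₁ m₂ γ with hψ
  have hmaps : ∀ γ ∈ Γ, ψ γ ∈ GammaSq m₁ m₂ := by
    intro γ hγ
    by_cases h : γ ∈ GammaSq m₁ m₂
    · simpa [hψ, h] using h
    · simp only [hψ, if_neg h]
      exact flip_mem_GammaSq m₁ m₂ hm₂ γ (hK hγ) (hEv γ hγ) h
  have hinjon : ∀ γ₁ γ₂ (h₁ : γ₁ ∈ Γ) (h₂ : γ₂ ∈ Γ), ψ γ₁ = ψ γ₂ → γ₁ = γ₂ := by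
    intro γ₁ γ₂ h₁ h₂ heq
    by_cases ha : γ₁ ∈ GammaSq m₁ m₂ <;> by_cases hb : γ₂ ∈ GammaSq m₁ m₂
    · simpa [hψ, ha, hb] using heq
    · simp only [hψ, if_pos ha, if_neg hb] at heq
      exact absurd (heq ▸ h₁) (hpair γ₂ h₂)
    · simp only [hψ, if_neg ha, if_pos hb] at heq
      exact absurd (heq ▸ h₂) (hpair γ₁ h₁)
    · simp only [hψ, if_neg ha, if_neg hb] at heq
      have := congrArg (flipOp m₁ m₂) heq
      rwa [flipOp_flip m₁ m₂ hm₂ γ₁ (hK h₁), flipOp_flip m₁ m₂ hm₂ γ₂ (hK h₂)] at this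
  have hsurj := Finset.surj_on_of_inj_on_of_card_le (s := Γ) (t := GammaSq m₁ m₂)
    (fun a _ => ψ a) (fun a ha => hmaps a ha) (fun a₁ a₂ ha₁ ha₂ h => hinjon a₁ a₂ ha₁ ha₂ h)
    hcardle
  have hcover : ∀ δ ∈ GammaSq m₁ m₂, δ ∈ Γ ∨ flipOp m₁ m₂ δ ∈ Γ := by
    intro δ hδ
    obtain ⟨a, ha, hb⟩ := hsurj δ hδ
    by_cases h : a ∈ GammaSq m₁ m₂
    · left
      have : δ = a := by rw [hb]; simp [hψ, h]
      rwa [this]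
    · right
      have h1 : δ = flipOp m₁ m₂ a := by rw [hb]; simp [hψ, h]
      have h2 : flipOp m₁ m₂ δ = a := by rw [h1, flipOp_flip m₁ m₂ hm₂ a (hK ha)]
      rwa [h2]
  constructor
  · refine ⟨(GammaSq m₁ m₂).filter (fun γ => γ ∉ Γ), Finset.filter_subset _ _, ?_⟩
    ext γ
    simp only [Finset.mem_union, Finset.mem_sdiff, Finset.mem_filter]
    constructor
    · intro hγ
      by_cases h : γ ∈ GammaSq m₁ m₂
      · left
        exact ⟨h, fun hcontra => hcontra.2 hγ⟩
      · right
        refine ⟨hK hγ, flip_mem_GammaSq m₁ m₂ hm₂ γ (hK hγ) (hEv γ hγ) h, hpair γ hγ⟩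
    · rintro (⟨hsq, hn⟩ | ⟨hKγ, hflipSq, hflipn⟩)
      · by_contra hne
        exact hn ⟨hsq, hne⟩
      · rcases hcover (flipOp m₁ m₂ γ) hflipSq with h | h
        · exact absurd h hflipn
        · rwa [flipOp_flip m₁ m₂ hm₂ γ hKγ] at h
  · intro γ hγ
    have hKγ := hK hγ
    simp only [KSet, Finset.mem_product, Finset.mem_Icc] at hKγ
    exact innerW_chi_self m₁ m₂ hm₁ hm₂ γ hKγ.1.1 hKγ.1.2
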